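/- arXiv:2502.00458 — 2 statements merged into one kernel-verified Lean document; each statement's English description precedes it below -/
import Mathlib

section
/- Let W ⊆ ℝ^{N+1} be a nonempty closed convex cone and a ∈ ℝ^{N+1} a nonzero vector. Then the point p ∈ W closest to a (if p ≠ 0) maximizes the function w ↦ (a·w)/‖w‖ over nonzero w ∈ W. Equivalently, for every nonzero w ∈ W, (a·p)/‖p‖ ≥ (a·w)/‖w‖. -/
open RealInnerProductSpace

/-- The nearest point `p` on a closed convex cone `W` to `a` (if nonzero)
maximizes `w ↦ ⟪a, w⟫ / ‖w‖` over nonzero `w ∈ W`. -/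
theorem prox_maximizes_cosine (N : ℕ) (W : Set (EuclideanSpace ℝ (Fin (N+1))))
    (hne : W.Nonempty) (hcl : IsClosed W) (hconv : Convex ℝ W)
    (hcone : ∀ c : ℝ, 0 ≤ c → ∀ w ∈ W, c • w ∈ W)
    (a : EuclideanSpace ℝ (Fin (N+1))) (ha : a ≠ 0)
    (p : EuclideanSpace ℝ (Fin (N+1))) (hpW : p ∈ W)
    (hprox : ∀ w ∈ W, ‖a - p‖ ≤ ‖a - w‖) (hp : p ≠ 0) :
    ∀ w ∈ W, w ≠ 0 →
      (inner ℝ a w : ℝ) / ‖w‖ ≤ (inner ℝ a p : ℝ) / ‖p‖ := by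
  haveI : Nonempty W := ⟨⟨p, hpW⟩⟩
  have hmin : ‖a - p‖ = ⨅ w : W, ‖a - w‖ := by
    have hbdd : BddBelow (Set.range fun w : W => ‖a - (w : EuclideanSpace ℝ (Fin (N+1)))‖) := by
      refine ⟨0, ?_⟩
      rintro x ⟨w, rfl⟩
      exact norm_nonneg _
    exact le_antisymm (le_ciInf fun w => hprox w w.2) (ciInf_le hbdd ⟨p, hpW⟩)
  have hvar : ∀ w ∈ W, (inner ℝ (a - p) (w - p) : ℝ) ≤ 0 :=
    (norm_eq_iInf_iff_real_inner_le_zero hconv hpW).1 hmin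
  -- 0 ∈ W and 2p ∈ W
  have h0 : (0 : EuclideanSpace ℝ (Fin (N+1))) ∈ W := by
    simpa using hcone 0 le_rfl p hpW
  have h2p : (2 : ℝ) • p ∈ W := hcone 2 (by norm_num) p hpW
  have key : (inner ℝ (a - p) (p) : ℝ) = 0 := by
    have h1 := hvar 0 h0
    have h2 := hvar ((2:ℝ) • p) h2p
    rw [zero_sub, inner_neg_right] at h1
    have : ((2:ℝ) • p) - p = p := by
      rw [two_smul]; abel
    rw [this] at h2
    linarith
  have hap : (inner ℝ (a) (p) : ℝ) = ‖p‖ ^ 2 := by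
    have := key
    rw [inner_sub_left, real_inner_self_eq_norm_sq] at this
    linarith
  intro w hw hw0
  have hwpos : (0:ℝ) < ‖w‖ := norm_pos_iff.2 hw0
  have hppos : (0:ℝ) < ‖p‖ := norm_pos_iff.2 hp
  have haw : (inner ℝ (a) (w) : ℝ) ≤ ‖p‖ * ‖w‖ := by
    have h3 := hvar w hw
    rw [inner_sub_right, key, sub_zero, inner_sub_left] at h3
    have hcs : (inner ℝ (p) (w) : ℝ) ≤ ‖p‖ * ‖w‖ := real_inner_le_norm p w
    linarith
  rw [hap, div_le_div_iff₀ hwpos hppos]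
  calc (inner ℝ (a) (w) : ℝ) * ‖p‖ ≤ (‖p‖ * ‖w‖) * ‖p‖ := by nlinarith
    _ = ‖p‖ ^ 2 * ‖w‖ := by ring
end

section
/- For every positive integer r, the ceiling of the unique positive real root α(r) of f(r,x) = (4r-2)x^3 + (6r-6)x^2 - (12r^3+6r^2+4r+4)x - (30r^3+18r^2) satisfies ⌈α(r)⌉ ∈ {⌈√3·r + (√3+1)/2⌉, ⌈√3·r + (√3+1)/2⌉ + 1}. -/
noncomputable def cuspPoly (r : ℤ) (x : ℝ) : ℝ :=
  (4*(r:ℝ)-2)*x^3 + (6*(r:ℝ)-6)*x^2 - (12*(r:ℝ)^3+6*(r:ℝ)^2+4*(r:ℝ)+4)*x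
    - (30*(r:ℝ)^3+18*(r:ℝ)^2)

/-- Convexity interpolation inequality for `cuspPoly` on `[0,∞)`. -/
lemma cuspPoly_interp (r : ℤ) (hr : 1 ≤ r) (a c b : ℝ) (ha : 0 ≤ a)
    (hac : a ≤ c) (hcb : c ≤ b) :
    (b-a) * cuspPoly r c ≤ (b-c) * cuspPoly r a + (c-a) * cuspPoly r b := by
  have hR : (1:ℝ) ≤ (r:ℝ) := by exact_mod_cast hr
  have key : (b-c) * cuspPoly r a + (c-a) * cuspPoly r b - (b-a) * cuspPoly r c
      = (b-a)*(c-a)*(b-c)*((4*(r:ℝ)-2)*(a+b+c)+(6*(r:ℝ)-6)) := by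
    unfold cuspPoly; ring
  have h1 : (0:ℝ) ≤ (b-a)*(c-a)*(b-c)*((4*(r:ℝ)-2)*(a+b+c)+(6*(r:ℝ)-6)) := by
    have habc : (0:ℝ) ≤ a + b + c := by linarith
    have hco : (0:ℝ) ≤ (4*(r:ℝ)-2)*(a+b+c)+(6*(r:ℝ)-6) := by nlinarith
    have : (0:ℝ) ≤ (b-a)*(c-a)*(b-c) :=
      mul_nonneg (mul_nonneg (by linarith) (by linarith)) (by linarith)
    exact mul_nonneg this hco
  linarith

/-- The ceiling of the unique positive root `α(r)` of `f(r,x)` is one of two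
consecutive integers determined by `√3 r + (√3+1)/2`. -/
theorem ceil_alpha_two_values (r : ℤ) (hr : 1 ≤ r) (α : ℝ)
    (hα : 0 < α ∧ cuspPoly r α = 0) :
    ⌈α⌉ = ⌈Real.sqrt 3 * (r:ℝ) + (Real.sqrt 3 + 1)/2⌉ ∨
    ⌈α⌉ = ⌈Real.sqrt 3 * (r:ℝ) + (Real.sqrt 3 + 1)/2⌉ + 1 := by
  obtain ⟨hα0, hαf⟩ := hα
  set s : ℝ := Real.sqrt 3 with hs_def
  have hs2 : s^2 = 3 := Real.sq_sqrt (by norm_num)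
  have hs0 : 0 ≤ s := Real.sqrt_nonneg 3
  have hs1 : 1 < s := by nlinarith
  have hslt : s < 2 := by nlinarith
  have hR : (1:ℝ) ≤ (r:ℝ) := by exact_mod_cast hr
  set R : ℝ := (r:ℝ) with hR_def
  set β : ℝ := s * R + (s + 1)/2 with hβ_def
  have hβpos : 0 < β := by
    have h := mul_pos (show (0:ℝ) < s by linarith) (show (0:ℝ) < R by linarith)
    rw [hβ_def]; linarith
  -- value of f at 0 and β
  have hf0 : cuspPoly r 0 < 0 := by unfold cuspPoly; nlinarith
  have hfβval : cuspPoly r β = -(12*R^2+18*R+21/2) + s*(2*R^2-12*R-13/2) := by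
    unfold cuspPoly
    rw [hβ_def]
    linear_combination (4*R^4*s + 4*R^3*s + 12*R^3 + 3*R^2 - R*s - 6*R - s/4 - 9/4) * hs2
  have hfβ : cuspPoly r β < 0 := by
    rw [hfβval]
    rcases le_or_gt (2*R^2-12*R-13/2) 0 with h | h
    · nlinarith
    · nlinarith
  -- lower bound: β < α
  have hβα : β < α := by
    by_contra h
    push_neg at h
    have hI := cuspPoly_interp r hr 0 α β le_rfl hα0.le h
    rw [hαf] at hI
    have h1 : (β - α) * cuspPoly r 0 ≤ 0 :=
      mul_nonpos_of_nonneg_of_nonpos (by linarith) hf0.le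
    have h2 : (α - 0) * cuspPoly r β < 0 :=
      mul_neg_of_pos_of_neg (by linarith) hfβ
    linarith
  have hceil_lo : ⌈β⌉ ≤ ⌈α⌉ := Int.ceil_le_ceil hβα.le
  -- upper bound
  have hceil_hi : ⌈α⌉ ≤ ⌈β⌉ + 1 := by
    rcases eq_or_lt_of_le hr with hr1 | hr2
    · -- r = 1
      have hr1' : r = 1 := hr1.symm
      have hRval : R = 1 := by rw [hR_def, hr1']; norm_num
      have hf5 : cuspPoly r 5 > 0 := by
        unfold cuspPoly; rw [hr1']; norm_num
      have hα5 : α ≤ 5 := by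
        by_contra h
        push_neg at h
        have hI := cuspPoly_interp r hr 0 5 α le_rfl (by norm_num) h.le
        rw [hαf] at hI
        have h1 : (α - 5) * cuspPoly r 0 < 0 :=
          mul_neg_of_pos_of_neg (by linarith) hf0
        have h2 : (0:ℝ) < (α - 0) * cuspPoly r 5 :=
          mul_pos (by linarith) hf5
        linarith
      have hβ4 : ⌈β⌉ = 4 := by
        rw [Int.ceil_eq_iff]
        constructor
        · push_cast
          rw [hβ_def, hRval]; nlinarith
        · push_cast
          rw [hβ_def, hRval]; nlinarith
      have : ⌈α⌉ ≤ 5 := Int.ceil_le.mpr (by exact_mod_cast hα5)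
      omega
    · -- r ≥ 2
      have hR2 : (2:ℝ) ≤ R := by rw [hR_def]; exact_mod_cast hr2
      have hfβ1val : cuspPoly r (β+1)
          = (24*R^3 - 6*R - 75/2) + s*(38*R^2 - 18*R - 37/2) := by
        unfold cuspPoly
        rw [hβ_def]
        linear_combination (4*R^4*s + 4*R^3*s + 24*R^3 + 9*R^2 - R*s - 9*R - s/4 - 15/4) * hs2
      have hfβ1 : 0 < cuspPoly r (β+1) := by
        rw [hfβ1val]
        nlinarith
      have hαβ1 : α ≤ β + 1 := by
        by_contra h
        push_neg at h
        have hI := cuspPoly_interp r hr 0 (β+1) α le_rfl (by linarith) h.le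
        rw [hαf] at hI
        have h1 : (α - (β+1)) * cuspPoly r 0 < 0 :=
          mul_neg_of_pos_of_neg (by linarith) hf0
        have h2 : (0:ℝ) < (α - 0) * cuspPoly r (β+1) :=
          mul_pos (by linarith) hfβ1
        linarith
      calc ⌈α⌉ ≤ ⌈β + 1⌉ := Int.ceil_le_ceil hαβ1
        _ = ⌈β⌉ + 1 := by
          rw [show β + 1 = β + (1:ℤ) by norm_num, Int.ceil_add_intCast]
  omega
end
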